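/- Define Ω₂(a,b) = 1/(2√(ab)·(√a+√b)²) for positive reals a, b. Let ξ₁, ξ₂, ξ₃ be positive reals with ξ₁ ≠ ξ₂ and ξ₁ ≠ ξ₃. Then (1/4)·ξ₁^{−1}·ξ₂^{−3/2}·ξ₃^{−3/2} = Ω₂(ξ₁,ξ₂)·Ω₂(ξ₁,ξ₃) + D₂ + D₃, where D₂ is the derivative at t = ξ₂ of the function t ↦ (Ω₂(ξ₁,ξ₃) − Ω₂(t,ξ₃)) / (ξ₁ − t), and D₃ is the derivative at t = ξ₃ of the function t ↦ (Ω₂(ξ₁,ξ₂) − Ω₂(ξ₂,t)) / (ξ₁ − t). -/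

import Mathlib

/-- The two-point kernel `Ω₂(a,b) = 1/(2√(ab)(√a+√b)²)` of the multicritical DT model. -/
noncomputable def Omega2 (a b : ℝ) : ℝ :=
  1 / (2 * Real.sqrt (a * b) * (Real.sqrt a + Real.sqrt b) ^ 2)

lemma rpow_aux (y : ℝ) (hy : 0 < y) : (y ^ 2 : ℝ) ^ (-(3 / 2) : ℝ) = (y ^ 3)⁻¹ := by
  rw [← Real.rpow_natCast y 2, ← Real.rpow_mul hy.le]
  norm_num

/-- Equation (A.4) of the paper: the key algebraic identity for the two-point kernel `Ω₂`
used in the proof of Proposition 1,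
`(1/4)ξ₁⁻¹ξ₂^{−3/2}ξ₃^{−3/2} = Ω₂(ξ₁,ξ₂)Ω₂(ξ₁,ξ₃) + D₂ + D₃`. -/
theorem omega2_key_identity (ξ₁ ξ₂ ξ₃ : ℝ) (h₁ : 0 < ξ₁) (h₂ : 0 < ξ₂) (h₃ : 0 < ξ₃)
    (h₁₂ : ξ₁ ≠ ξ₂) (h₁₃ : ξ₁ ≠ ξ₃) :
    (1 / 4) * ξ₁⁻¹ * ξ₂ ^ (-(3 / 2) : ℝ) * ξ₃ ^ (-(3 / 2) : ℝ)
      = Omega2 ξ₁ ξ₂ * Omega2 ξ₁ ξ₃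
        + deriv (fun t => (Omega2 ξ₁ ξ₃ - Omega2 t ξ₃) / (ξ₁ - t)) ξ₂
        + deriv (fun t => (Omega2 ξ₁ ξ₂ - Omega2 ξ₂ t) / (ξ₁ - t)) ξ₃ := by

  have hx0 := Real.sqrt_pos.mpr h₁
  have hy0 := Real.sqrt_pos.mpr h₂
  have hz0 := Real.sqrt_pos.mpr h₃
  simp only [Omega2, one_div, Real.sqrt_mul h₁.le, Real.sqrt_mul h₂.le,
    Real.sqrt_mul' _ h₃.le]
  have hs2 : HasDerivAt Real.sqrt (1 / (2 * Real.sqrt ξ₂)) ξ₂ := Real.hasDerivAt_sqrt h₂.ne'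
  have hs3 : HasDerivAt Real.sqrt (1 / (2 * Real.sqrt ξ₃)) ξ₃ := Real.hasDerivAt_sqrt h₃.ne'
  have hden2 : 2 * (Real.sqrt ξ₂ * Real.sqrt ξ₃) * (Real.sqrt ξ₂ + Real.sqrt ξ₃) ^ 2 ≠ 0 := by
    positivity
  have hden3 : 2 * (Real.sqrt ξ₂ * Real.sqrt ξ₃) * (Real.sqrt ξ₂ + Real.sqrt ξ₃) ^ 2 ≠ 0 := by
    positivity
  have H2 := ((((hs2.mul_const (Real.sqrt ξ₃)).const_mul 2).mul
      ((hs2.add_const (Real.sqrt ξ₃)).pow 2)).inv hden2)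
  have H3 := ((((hs3.const_mul (Real.sqrt ξ₂)).const_mul 2).mul
      ((hs3.const_add (Real.sqrt ξ₂)).pow 2)).inv hden3)
  have hf2 := ((hasDerivAt_const ξ₂
      ((2 * (Real.sqrt ξ₁ * Real.sqrt ξ₃) * (Real.sqrt ξ₁ + Real.sqrt ξ₃) ^ 2)⁻¹)).sub H2).div
      ((hasDerivAt_const ξ₂ ξ₁).sub (hasDerivAt_id' (x := ξ₂))) (sub_ne_zero.mpr h₁₂)
  have hf3 := ((hasDerivAt_const ξ₃
      ((2 * (Real.sqrt ξ₁ * Real.sqrt ξ₂) * (Real.sqrt ξ₁ + Real.sqrt ξ₂) ^ 2)⁻¹)).sub H3).div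
      ((hasDerivAt_const ξ₃ ξ₁).sub (hasDerivAt_id' (x := ξ₃))) (sub_ne_zero.mpr h₁₃)
  rw [show deriv (fun t => ((2 * (Real.sqrt ξ₁ * Real.sqrt ξ₃) * (Real.sqrt ξ₁ + Real.sqrt ξ₃) ^ 2)⁻¹
      - (2 * (Real.sqrt t * Real.sqrt ξ₃) * (Real.sqrt t + Real.sqrt ξ₃) ^ 2)⁻¹) / (ξ₁ - t)) ξ₂ = _
      from hf2.deriv,
    show deriv (fun t => ((2 * (Real.sqrt ξ₁ * Real.sqrt ξ₂) * (Real.sqrt ξ₁ + Real.sqrt ξ₂) ^ 2)⁻¹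
      - (2 * (Real.sqrt ξ₂ * Real.sqrt t) * (Real.sqrt ξ₂ + Real.sqrt t) ^ 2)⁻¹) / (ξ₁ - t)) ξ₃ = _
      from hf3.deriv]
  set x := Real.sqrt ξ₁ with hxd
  set y := Real.sqrt ξ₂ with hyd
  set z := Real.sqrt ξ₃ with hzd
  have hx2 : x ^ 2 = ξ₁ := Real.sq_sqrt h₁.le
  have hy2 : y ^ 2 = ξ₂ := Real.sq_sqrt h₂.le
  have hz2 : z ^ 2 = ξ₃ := Real.sq_sqrt h₃.le
  rw [← hx2, ← hy2, ← hz2, rpow_aux y hy0, rpow_aux z hz0]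
  have hxy : x ^ 2 - y ^ 2 ≠ 0 := by rw [hx2, hy2]; exact sub_ne_zero.mpr h₁₂
  have hxz : x ^ 2 - z ^ 2 ≠ 0 := by rw [hx2, hz2]; exact sub_ne_zero.mpr h₁₃
  have hxy' : x + y ≠ 0 := by positivity
  have hxz' : x + z ≠ 0 := by positivity
  have hyz' : y + z ≠ 0 := by positivity
  norm_num
  field_simp
  simp only [Real.sqrt_sq hy0.le, Real.sqrt_sq hz0.le]
  ring
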